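/- Efficiency bound for TS with deterministic workloads: let μ_1,...,μ_n > 0, q ∈ [0,1]^n with Σ_{i∈N} q_i μ_i ≤ mδ, and each μ_i ≤ mδ. Fix a subset S ⊆ N and an ordering d of N that places S first. Define p_i(d) = 1 if i is among the greedy prefix J(d) = {d_1,...,d_{j(d)}} with j(d) = max{ j : Σ_{i=1}^{j} μ_{d_i} ≤ mδ }, and p_i(d) = 0 otherwise. Then Σ_{i∈S} μ_i p_i(d) ≥ (1 − (max_i μ_i)/(mδ)) · Σ_{i∈S} μ_i q_i. -/

import Mathlib

open Finset

/-- Efficiency bound for task selection with deterministic workloads: with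
`Σ_i q_i μ_i ≤ mδ`, each `μ_i ≤ mδ`, an ordering `d` placing the subset `S` first,
greedy prefix `J(d) = {d 0, ..., d (jd - 1)}` with `jd = max { j : Σ_{i<j} μ (d i) ≤ mδ }`,
and `p i = 1` iff `i ∈ J(d)`, one has
`Σ_{i∈S} μ_i p_i ≥ (1 − (max_i μ_i)/(mδ)) Σ_{i∈S} μ_i q_i`. -/
theorem ts_llref_efficiency_bound (n : ℕ) (hn : n ≠ 0) (m : ℕ) (hm : 0 < m)
    (δ : ℝ) (hδ : 0 < δ)
    (μ : Fin n → ℝ) (hμpos : ∀ i, 0 < μ i) (hμle : ∀ i, μ i ≤ (m : ℝ) * δ)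
    (q : Fin n → ℝ) (hq : ∀ i, 0 ≤ q i ∧ q i ≤ 1)
    (hfeas : ∑ i, q i * μ i ≤ (m : ℝ) * δ)
    (S : Finset (Fin n)) (d : Equiv.Perm (Fin n))
    (hSfirst : ∀ i : Fin n, d i ∈ S ↔ (i : ℕ) < S.card)
    (jd : ℕ) (hjdn : jd ≤ n)
    (hle : ∑ i ∈ univ.filter (fun i : Fin n => (i : ℕ) < jd), μ (d i) ≤ (m : ℝ) * δ)
    (hmaxsel : jd = n ∨
      (m : ℝ) * δ < ∑ i ∈ univ.filter (fun i : Fin n => (i : ℕ) < jd + 1), μ (d i))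
    (p : Fin n → ℝ)
    (hp : ∀ i : Fin n, p i = if ((d.symm i : ℕ) < jd) then (1 : ℝ) else 0) :
    (1 - (univ.sup' (univ_nonempty_iff.mpr ⟨⟨0, Nat.pos_of_ne_zero hn⟩⟩) μ) / ((m : ℝ) * δ))
        * ∑ i ∈ S, μ i * q i
      ≤ ∑ i ∈ S, μ i * p i := by
  set M := univ.sup' (univ_nonempty_iff.mpr ⟨⟨0, Nat.pos_of_ne_zero hn⟩⟩) μ with hMdef
  have hmδ : (0:ℝ) < (m:ℝ) * δ := by positivity
  have hMμ : ∀ i, μ i ≤ M := fun i => le_sup' μ (mem_univ i)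
  have hMle : M ≤ (m:ℝ) * δ := sup'_le _ _ (fun i _ => hμle i)
  have hM0 : (0:ℝ) < M := lt_of_lt_of_le (hμpos ⟨0, Nat.pos_of_ne_zero hn⟩) (hMμ _)
  have hfac0 : 0 ≤ 1 - M / ((m:ℝ)*δ) := by
    rw [sub_nonneg]
    exact div_le_one_of_le₀ hMle hmδ.le
  have hfac1 : 1 - M / ((m:ℝ)*δ) ≤ 1 := by
    have : 0 ≤ M / ((m:ℝ)*δ) := by positivity
    linarith
  have hp_nonneg : ∀ i, 0 ≤ p i := by
    intro i; rw [hp]; split <;> norm_num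
  have hSq_nonneg : 0 ≤ ∑ i ∈ S, μ i * q i :=
    sum_nonneg fun i _ => mul_nonneg (hμpos i).le (hq i).1
  have hSq_le : ∑ i ∈ S, μ i * q i ≤ ∑ i ∈ S, μ i :=
    sum_le_sum fun i _ => by nlinarith [(hq i).2, hμpos i]
  have hSq_mδ : ∑ i ∈ S, μ i * q i ≤ (m:ℝ) * δ := by
    calc ∑ i ∈ S, μ i * q i
        ≤ ∑ i ∈ univ, μ i * q i :=
          sum_le_sum_of_subset_of_nonneg (subset_univ S)
            (fun i _ _ => mul_nonneg (hμpos i).le (hq i).1)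
      _ = ∑ i, q i * μ i := by simp [mul_comm]
      _ ≤ _ := hfeas
  by_cases hcase : S.card ≤ jd
  · have hpS : ∀ i ∈ S, p i = 1 := by
      intro i hi
      rw [hp]
      have h1 : (d.symm i : ℕ) < S.card := (hSfirst (d.symm i)).mp (by simpa using hi)
      rw [if_pos (lt_of_lt_of_le h1 hcase)]
    have hsum : ∑ i ∈ S, μ i * p i = ∑ i ∈ S, μ i :=
      sum_congr rfl fun i hi => by rw [hpS i hi, mul_one]
    rw [hsum]
    calc (1 - M / ((m:ℝ)*δ)) * ∑ i ∈ S, μ i * q i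
        ≤ 1 * ∑ i ∈ S, μ i * q i := mul_le_mul_of_nonneg_right hfac1 hSq_nonneg
      _ = ∑ i ∈ S, μ i * q i := one_mul _
      _ ≤ ∑ i ∈ S, μ i := hSq_le
  · push_neg at hcase
    have hSn : S.card ≤ n := by
      have := card_le_card (subset_univ S)
      simpa using this
    have hjdn' : jd < n := lt_of_lt_of_le hcase hSn
    have hstrict : (m:ℝ)*δ < ∑ i ∈ univ.filter (fun i : Fin n => (i : ℕ) < jd + 1), μ (d i) := by
      rcases hmaxsel with h | h
      · omega
      · exact h
    have hins : univ.filter (fun i : Fin n => (i : ℕ) < jd + 1)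
        = insert (⟨jd, hjdn'⟩ : Fin n) (univ.filter (fun i : Fin n => (i : ℕ) < jd)) := by
      ext i
      simp [Nat.lt_succ_iff_lt_or_eq, Fin.ext_iff, or_comm]
      omega
    have hnotmem : (⟨jd, hjdn'⟩ : Fin n) ∉ univ.filter (fun i : Fin n => (i : ℕ) < jd) := by
      simp
    rw [hins, sum_insert hnotmem] at hstrict
    have hTgt : (m:ℝ)*δ - M < ∑ i ∈ univ.filter (fun i : Fin n => (i : ℕ) < jd), μ (d i) := by
      have := hMμ (d ⟨jd, hjdn'⟩)
      linarith
    -- transfer the prefix sum into the sum over S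
    have hkey : ∑ i ∈ univ.filter (fun i : Fin n => (i : ℕ) < jd), μ (d i)
        ≤ ∑ i ∈ S, μ i * p i := by
      have himg : (univ.filter (fun i : Fin n => (i : ℕ) < jd)).image d ⊆ S := by
        intro j hj
        obtain ⟨i, hi, rfl⟩ := mem_image.mp hj
        have : (i : ℕ) < jd := (mem_filter.mp hi).2
        exact (hSfirst i).mpr (lt_trans this hcase)
      have hinj : ∀ a ∈ univ.filter (fun i : Fin n => (i : ℕ) < jd),
          ∀ b ∈ univ.filter (fun i : Fin n => (i : ℕ) < jd), d a = d b → a = b :=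
        fun a _ b _ h => d.injective h
      calc ∑ i ∈ univ.filter (fun i : Fin n => (i : ℕ) < jd), μ (d i)
          = ∑ j ∈ (univ.filter (fun i : Fin n => (i : ℕ) < jd)).image d, μ j :=
            (sum_image hinj).symm
        _ = ∑ j ∈ (univ.filter (fun i : Fin n => (i : ℕ) < jd)).image d, μ j * p j := by
            refine sum_congr rfl fun j hj => ?_
            obtain ⟨i, hi, rfl⟩ := mem_image.mp hj
            have : (i : ℕ) < jd := (mem_filter.mp hi).2
            rw [hp]
            simp [this]
        _ ≤ ∑ j ∈ S, μ j * p j :=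
            sum_le_sum_of_subset_of_nonneg himg
              (fun j _ _ => mul_nonneg (hμpos j).le (hp_nonneg j))
    have hfacmδ : (1 - M / ((m:ℝ)*δ)) * ((m:ℝ)*δ) = (m:ℝ)*δ - M := by
      field_simp
    have : (1 - M / ((m:ℝ)*δ)) * ∑ i ∈ S, μ i * q i ≤ (m:ℝ)*δ - M := by
      calc (1 - M / ((m:ℝ)*δ)) * ∑ i ∈ S, μ i * q i
          ≤ (1 - M / ((m:ℝ)*δ)) * ((m:ℝ)*δ) := mul_le_mul_of_nonneg_left hSq_mδ hfac0
        _ = (m:ℝ)*δ - M := hfacmδ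
    linarith
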